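/- If ν is a shift-invariant Gibbs measure for a shift-invariant Gibbs structure over a countable group G, then the shift action of G on (A^G, ν) is essentially free: for every g ≠ e, the set {ω : gω = ω} is ν-null. -/

import Mathlib

open MeasureTheory Real Filter Topology
open scoped ENNReal

noncomputable section
open scoped Classical

namespace ShiftGibbs

variable {G : Type*} [Group G] {A : Type*} [Fintype A] [Nonempty A]
  [MeasurableSpace A] [MeasurableSingletonClass A]

/-- The shift action of `G` on `A^G`: `(g • x)(h) = x (h * g)`. -/
def shift (g : G) (x : G → A) : G → A := fun h => x (h * g)

/-- The energy in the window `Λ` for the shift-invariant potential `φ` with base window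
`D`: `∑_{g : Dg ∩ Λ ≠ ∅} φ (g • x)`. -/
def energy (φ : (G → A) → ℝ) (D : Finset G) (Λ : Finset G) (x : G → A) : ℝ :=
  ∑ᶠ g ∈ {g : G | ∃ d ∈ D, d * g ∈ Λ}, φ (shift g x)

/-- Replace the coordinates of `η` inside `Λ` by `τ`. -/
def paste (Λ : Finset G) (η : G → A) (τ : Λ → A) : G → A :=
  fun v => if h : v ∈ Λ then τ ⟨v, h⟩ else η v

/-- The Gibbs resampling measure `π_{Λ}(η)` for the potential `φ`: resample the coordinates
in `Λ` with probabilities proportional to `exp (-∑_{Dg ∩ Λ ≠ ∅} φ (g • ·))`. -/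
def kernelMeasure (φ : (G → A) → ℝ) (D : Finset G) (Λ : Finset G) (η : G → A) :
    Measure (G → A) :=
  ∑ τ : Λ → A,
    (ENNReal.ofReal (Real.exp (-(energy φ D Λ (paste Λ η τ))) /
        ∑ τ' : Λ → A, Real.exp (-(energy φ D Λ (paste Λ η τ'))))) •
      Measure.dirac (paste Λ η τ)

/-- `ν` is a Gibbs measure for the shift-invariant Gibbs structure of `(φ, D)`. -/
def IsGibbs (φ : (G → A) → ℝ) (D : Finset G) (ν : Measure (G → A)) : Prop :=
  ∀ Λ : Finset G, ν.bind (kernelMeasure φ D Λ) = ν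

/-! ### Auxiliary definitions and lemmas -/

section Aux

variable (φ : (G → A) → ℝ) (D : Finset G)

/-- A bound for `|φ|`, valid whenever `φ` depends only on the coordinates in `D`. -/
def Mbound : ℝ :=
  Finset.univ.sup' Finset.univ_nonempty
    (fun f : D → A => |φ (fun v => if h : v ∈ D then f ⟨v, h⟩ else Classical.arbitrary A)|)

lemma Mbound_nonneg : 0 ≤ Mbound φ D := by
  obtain ⟨f⟩ : Nonempty (D → A) := inferInstance
  refine le_trans (abs_nonneg
    (φ (fun v => if h : v ∈ D then f ⟨v, h⟩ else Classical.arbitrary A))) ?_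
  exact Finset.le_sup'
    (fun f : D → A => |φ (fun v => if h : v ∈ D then f ⟨v, h⟩ else Classical.arbitrary A)|)
    (Finset.mem_univ f)

lemma abs_phi_le (hφ : ∀ x y : G → A, (∀ d ∈ D, x d = y d) → φ x = φ y) (x : G → A) :
    |φ x| ≤ Mbound φ D := by
  have hx : φ x = φ (fun v => if h : v ∈ D then
      (fun d : D => x d) ⟨v, h⟩ else Classical.arbitrary A) := by
    apply hφ
    intro d hd
    simp [hd]
  rw [hx]
  exact Finset.le_sup'
    (fun f : D → A => |φ (fun v => if h : v ∈ D then f ⟨v, h⟩ else Classical.arbitrary A)|)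
    (Finset.mem_univ fun d : D => x (d : G))

/-- The finite set of group elements contributing to `energy φ D Λ`. -/
def window (D Λ : Finset G) : Finset G := Λ.biUnion fun h => D.image fun d => d⁻¹ * h

lemma energy_eq (Λ : Finset G) (x : G → A) :
    energy φ D Λ x = ∑ g ∈ window D Λ, φ (shift g x) := by
  have hset : {g : G | ∃ d ∈ D, d * g ∈ Λ} = ↑(window D Λ) := by
    ext g
    simp only [Set.mem_setOf_eq, window, Finset.coe_biUnion, Set.mem_iUnion, Finset.mem_coe,
      Finset.mem_image]
    constructor
    · rintro ⟨d, hd, hdg⟩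
      exact ⟨d * g, hdg, d, hd, by group⟩
    · rintro ⟨h, hh, d, hd, rfl⟩
      exact ⟨d, hd, by simpa using hh⟩
  rw [energy, hset, finsum_mem_coe_finset]

lemma abs_energy_singleton_le (hφ : ∀ x y : G → A, (∀ d ∈ D, x d = y d) → φ x = φ y)
    (h₀ : G) (x : G → A) :
    |energy φ D {h₀} x| ≤ (D.card : ℝ) * Mbound φ D := by
  rw [energy_eq]
  calc |∑ g ∈ window D {h₀}, φ (shift g x)|
      ≤ ∑ g ∈ window D {h₀}, |φ (shift g x)| := Finset.abs_sum_le_sum_abs _ _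
    _ ≤ ∑ _g ∈ window D {h₀}, Mbound φ D :=
        Finset.sum_le_sum fun g _ => abs_phi_le φ D hφ _
    _ = ((window D {h₀}).card : ℝ) * Mbound φ D := by
        rw [Finset.sum_const, nsmul_eq_mul]
    _ ≤ (D.card : ℝ) * Mbound φ D := by
        apply mul_le_mul_of_nonneg_right _ (Mbound_nonneg φ D)
        have hw : window D {h₀} = D.image fun d => d⁻¹ * h₀ := by
          simp [window]
        rw [hw]
        exact_mod_cast Finset.card_image_le

/-- The uniform bound for the single-site resampling weights. -/
def cconst : ℝ := 1 / (1 + Real.exp (-(2 * ((D.card : ℝ) * Mbound φ D))))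

lemma cconst_lt_one : cconst φ D < 1 := by
  rw [cconst, div_lt_one (by positivity)]
  have := Real.exp_pos (-(2 * ((D.card : ℝ) * Mbound φ D)))
  linarith

/-- The key single-site weight bound. -/
lemma weight_le (hA : 1 < Fintype.card A)
    (hφ : ∀ x y : G → A, (∀ d ∈ D, x d = y d) → φ x = φ y) (h₀ : G) (η : G → A) (a₀ : A) :
    Real.exp (-(energy φ D {h₀} (paste {h₀} η fun _ => a₀))) /
      ∑ τ' : ({h₀} : Finset G) → A, Real.exp (-(energy φ D {h₀} (paste {h₀} η τ'))) ≤
    cconst φ D := by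
  set K : ℝ := (D.card : ℝ) * Mbound φ D with hK
  obtain ⟨a₁, ha₁⟩ := Fintype.exists_ne_of_one_lt_card hA a₀
  set E : (({h₀} : Finset G) → A) → ℝ := fun τ => energy φ D {h₀} (paste {h₀} η τ) with hE
  set τ₀ : ({h₀} : Finset G) → A := fun _ => a₀ with hτ₀
  set τ₁ : ({h₀} : Finset G) → A := fun _ => a₁ with hτ₁
  have hne : τ₀ ≠ τ₁ := by
    intro h
    exact ha₁ (congrFun h ⟨h₀, Finset.mem_singleton_self h₀⟩).symm
  have hEK : ∀ τ, |E τ| ≤ K := fun τ => abs_energy_singleton_le φ D hφ h₀ _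
  have h01 : Real.exp (-(E τ₀)) * Real.exp (-(2 * K)) ≤ Real.exp (-(E τ₁)) := by
    rw [← Real.exp_add]
    apply Real.exp_le_exp.mpr
    have h0 := abs_le.1 (hEK τ₀)
    have h1 := abs_le.1 (hEK τ₁)
    linarith
  have hdenom : Real.exp (-(E τ₀)) * (1 + Real.exp (-(2 * K))) ≤
      ∑ τ' : ({h₀} : Finset G) → A, Real.exp (-(E τ')) := by
    have hpair : ∑ τ ∈ ({τ₀, τ₁} : Finset (({h₀} : Finset G) → A)), Real.exp (-(E τ)) =
        Real.exp (-(E τ₀)) + Real.exp (-(E τ₁)) := Finset.sum_pair hne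
    have hsub := Finset.sum_le_sum_of_subset_of_nonneg
      (Finset.subset_univ ({τ₀, τ₁} : Finset (({h₀} : Finset G) → A)))
      (fun τ _ _ => (Real.exp_pos (-(E τ))).le)
    rw [hpair] at hsub
    nlinarith [h01]
  have hdpos : 0 < ∑ τ' : ({h₀} : Finset G) → A, Real.exp (-(E τ')) :=
    Finset.sum_pos (fun τ _ => Real.exp_pos _) Finset.univ_nonempty
  show Real.exp (-(E τ₀)) / _ ≤ _
  rw [cconst, div_le_div_iff₀ hdpos (by positivity)]
  calc Real.exp (-(E τ₀)) * (1 + Real.exp (-(2 * K))) ≤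
      ∑ τ' : ({h₀} : Finset G) → A, Real.exp (-(E τ')) := hdenom
    _ = 1 * ∑ τ' : ({h₀} : Finset G) → A, Real.exp (-(E τ')) := (one_mul _).symm

/-! ### Measurability -/

lemma measurable_shift (g : G) : Measurable (shift g : (G → A) → G → A) :=
  measurable_pi_lambda _ fun h => measurable_pi_apply (h * g)

lemma measurable_paste (Λ : Finset G) (τ : Λ → A) :
    Measurable fun η : G → A => paste Λ η τ := by
  apply measurable_pi_lambda
  intro v
  by_cases h : v ∈ Λ
  · simpa [paste, h] using measurable_const
  · simpa [paste, h] using measurable_pi_apply v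

lemma measurable_phi (hφ : ∀ x y : G → A, (∀ d ∈ D, x d = y d) → φ x = φ y) :
    Measurable φ := by
  have hrepr : φ = (fun f : D → A =>
      φ (fun v => if h : v ∈ D then f ⟨v, h⟩ else Classical.arbitrary A)) ∘
      (fun (x : G → A) (d : D) => x d) := by
    funext x
    exact hφ x _ (fun d hd => by simp [hd])
  rw [hrepr]
  exact (measurable_of_countable _).comp
    (measurable_pi_lambda _ fun d => measurable_pi_apply (d : G))

lemma measurable_energy_paste (hφ : ∀ x y : G → A, (∀ d ∈ D, x d = y d) → φ x = φ y)
    (Λ : Finset G) (τ : Λ → A) :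
    Measurable fun η : G → A => energy φ D Λ (paste Λ η τ) := by
  have hrepr : (fun η : G → A => energy φ D Λ (paste Λ η τ)) =
      fun η => ∑ g ∈ window D Λ, φ (shift g (paste Λ η τ)) :=
    funext fun η => energy_eq φ D Λ _
  rw [hrepr]
  exact Finset.measurable_sum _ fun g _ =>
    (measurable_phi φ D hφ).comp ((measurable_shift g).comp (measurable_paste Λ τ))

lemma measurable_kernel (hφ : ∀ x y : G → A, (∀ d ∈ D, x d = y d) → φ x = φ y)
    (Λ : Finset G) : Measurable (kernelMeasure φ D Λ) := by
  apply Measure.measurable_of_measurable_coe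
  intro s hs
  have hrepr : (fun η : G → A => kernelMeasure φ D Λ η s) = fun η =>
      ∑ τ : Λ → A,
        ENNReal.ofReal (Real.exp (-(energy φ D Λ (paste Λ η τ))) /
          ∑ τ' : Λ → A, Real.exp (-(energy φ D Λ (paste Λ η τ')))) *
        s.indicator 1 (paste Λ η τ) := by
    funext η
    rw [kernelMeasure, Measure.finset_sum_apply]
    refine Finset.sum_congr rfl fun τ _ => ?_
    rw [Measure.smul_apply, Measure.dirac_apply' _ hs, smul_eq_mul]
  rw [hrepr]
  apply Finset.measurable_sum
  intro τ _
  apply Measurable.mul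
  · apply ENNReal.measurable_ofReal.comp
    apply Measurable.div
    · exact Real.measurable_exp.comp (measurable_energy_paste φ D hφ Λ τ).neg
    · exact Finset.measurable_sum _ fun τ' _ =>
        Real.measurable_exp.comp (measurable_energy_paste φ D hφ Λ τ').neg
  · exact (measurable_one.indicator hs).comp (measurable_paste Λ τ)

end Aux

/-- The set of configurations agreeing at `h` and `h * g`. -/
def Efix (g h : G) : Set (G → A) := {x | x (h * g) = x h}

lemma measurableSet_Efix (g h : G) : MeasurableSet (Efix (A := A) g h) :=
  measurableSet_eq_fun (measurable_pi_apply (h * g)) (measurable_pi_apply h)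

section Main

variable (φ : (G → A) → ℝ) (D : Finset G)

/-- The key conditioning step. -/
lemma step (hA : 1 < Fintype.card A)
    (hφ : ∀ x y : G → A, (∀ d ∈ D, x d = y d) → φ x = φ y)
    (ν : Measure (G → A)) [IsProbabilityMeasure ν] (hGibbs : IsGibbs φ D ν)
    {g : G} (hg : g ≠ 1) (h₀ : G) (s : Finset G) (hns : h₀ ∉ s)
    (hgd : ∀ h ∈ s, h * g ≠ h₀) :
    ν (⋂ h ∈ (insert h₀ s : Finset G), Efix g h) ≤
      ENNReal.ofReal (cconst φ D) * ν (⋂ h ∈ s, Efix g h) := by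
  haveI : Subsingleton (({h₀} : Finset G) : Type _) :=
    ⟨fun a b => Subtype.ext (by
      rw [Finset.mem_singleton.mp a.2, Finset.mem_singleton.mp b.2])⟩
  set pt : (({h₀} : Finset G) : Type _) := ⟨h₀, Finset.mem_singleton_self h₀⟩ with hpt
  set F := ⋂ h ∈ (insert h₀ s : Finset G), Efix (A := A) g h with hFdef
  set Fs := ⋂ h ∈ s, Efix (A := A) g h with hFsdef
  have hF : MeasurableSet F :=
    MeasurableSet.biInter (Finset.countable_toSet _) fun h _ => measurableSet_Efix g h
  have hFs : MeasurableSet Fs :=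
    MeasurableSet.biInter (Finset.countable_toSet _) fun h _ => measurableSet_Efix g h
  have hgg : h₀ * g ≠ h₀ := fun hcon => hg (mul_eq_left.mp hcon)
  have hbind : ν F = ∫⁻ η, kernelMeasure φ D {h₀} η F ∂ν := by
    conv_lhs => rw [← hGibbs {h₀}]
    exact Measure.bind_apply hF (measurable_kernel φ D hφ {h₀}).aemeasurable
  have hpt2 : ∀ η : G → A, kernelMeasure φ D {h₀} η F ≤
      ENNReal.ofReal (cconst φ D) * Fs.indicator 1 η := by
    intro η
    -- membership of pastes in `F`
    have hFmem : ∀ τ : ({h₀} : Finset G) → A,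
        paste {h₀} η τ ∈ F ↔ (η ∈ Fs ∧ τ pt = η (h₀ * g)) := by
      intro τ
      have hpasteE : ∀ h ∈ s, (paste {h₀} η τ ∈ Efix (A := A) g h ↔ η ∈ Efix (A := A) g h) := by
        intro h hh
        have h1 : paste {h₀} η τ (h * g) = η (h * g) := by
          simp [paste, Finset.mem_singleton, hgd h hh]
        have h2 : paste {h₀} η τ h = η h := by
          simp [paste, Finset.mem_singleton, ne_of_mem_of_not_mem hh hns]
        simp [Efix, h1, h2]
      have hpaste0 : paste {h₀} η τ ∈ Efix (A := A) g h₀ ↔ τ pt = η (h₀ * g) := by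
        have h1 : paste {h₀} η τ (h₀ * g) = η (h₀ * g) := by
          simp [paste, Finset.mem_singleton, hgg]
        have h2 : paste {h₀} η τ h₀ = τ pt := by
          simp [paste, hpt]
        simp [Efix, h1, h2, eq_comm]
      rw [hFdef, hFsdef]
      simp only [Set.mem_iInter]
      constructor
      · intro hall
        refine ⟨fun h => fun hh => ?_, ?_⟩
        · exact (hpasteE h hh).1 (hall h (Finset.mem_insert_of_mem hh))
        · exact hpaste0.1 (hall h₀ (Finset.mem_insert_self _ _))
      · rintro ⟨h1, h2⟩ h hh
        rcases Finset.mem_insert.1 hh with rfl | hh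
        · exact hpaste0.2 h2
        · exact (hpasteE h hh).2 (h1 h hh)
    have happly : kernelMeasure φ D {h₀} η F =
        ∑ τ : ({h₀} : Finset G) → A,
          ENNReal.ofReal (Real.exp (-(energy φ D {h₀} (paste {h₀} η τ))) /
            ∑ τ' : ({h₀} : Finset G) → A,
              Real.exp (-(energy φ D {h₀} (paste {h₀} η τ')))) *
          F.indicator 1 (paste {h₀} η τ) := by
      rw [kernelMeasure, Measure.finset_sum_apply]
      refine Finset.sum_congr rfl fun τ _ => ?_
      rw [Measure.smul_apply, Measure.dirac_apply' _ hF, smul_eq_mul]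
    by_cases hη : η ∈ Fs
    · -- the sum reduces to a single weight
      set w : (({h₀} : Finset G) → A) → ℝ≥0∞ := fun τ =>
        ENNReal.ofReal (Real.exp (-(energy φ D {h₀} (paste {h₀} η τ))) /
          ∑ τ' : ({h₀} : Finset G) → A,
            Real.exp (-(energy φ D {h₀} (paste {h₀} η τ')))) with hw
      have hsum : kernelMeasure φ D {h₀} η F = w (fun _ => η (h₀ * g)) := by
        rw [happly]
        have hterm : ∀ τ : ({h₀} : Finset G) → A,
            w τ * F.indicator 1 (paste {h₀} η τ) =
              if τ pt = η (h₀ * g) then w τ else 0 := by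
          intro τ
          rw [Set.indicator_apply]
          by_cases hc : τ pt = η (h₀ * g)
          · rw [if_pos ((hFmem τ).2 ⟨hη, hc⟩), if_pos hc, Pi.one_apply, mul_one]
          · rw [if_neg (fun hmem => hc ((hFmem τ).1 hmem).2), if_neg hc, mul_zero]
        calc (∑ τ : ({h₀} : Finset G) → A, w τ * F.indicator 1 (paste {h₀} η τ))
            = ∑ τ : ({h₀} : Finset G) → A, if τ pt = η (h₀ * g) then w τ else 0 :=
              Finset.sum_congr rfl fun τ _ => hterm τ
          _ = w (fun _ => η (h₀ * g)) := by
              rw [Finset.sum_eq_single (fun _ => η (h₀ * g) : ({h₀} : Finset G) → A)]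
              · rw [if_pos rfl]
              · intro τ _ hτ
                rw [if_neg]
                intro hcon
                apply hτ
                funext i
                have hi : i = pt := Subsingleton.elim _ _
                rw [hi, hcon]
              · intro h
                exact absurd (Finset.mem_univ _) h
      rw [hsum, hw]
      have hind : Fs.indicator (1 : (G → A) → ℝ≥0∞) η = 1 := by
        rw [Set.indicator_of_mem hη, Pi.one_apply]
      rw [hind, mul_one]
      exact ENNReal.ofReal_le_ofReal (weight_le φ D hA hφ h₀ η (η (h₀ * g)))
    · -- all terms vanish
      have hzero : kernelMeasure φ D {h₀} η F = 0 := by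
        rw [happly]
        apply Finset.sum_eq_zero
        intro τ _
        have : paste {h₀} η τ ∉ F := fun hmem => hη ((hFmem τ).1 hmem).1
        rw [Set.indicator_of_notMem this, mul_zero]
      rw [hzero]
      exact zero_le'
  calc ν F = ∫⁻ η, kernelMeasure φ D {h₀} η F ∂ν := hbind
    _ ≤ ∫⁻ η, ENNReal.ofReal (cconst φ D) * Fs.indicator 1 η ∂ν := lintegral_mono hpt2
    _ = ENNReal.ofReal (cconst φ D) * ∫⁻ η, Fs.indicator 1 η ∂ν :=
        lintegral_const_mul _ (measurable_one.indicator hFs)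
    _ = ENNReal.ofReal (cconst φ D) * ν Fs := by rw [lintegral_indicator_one hFs]

lemma bound (hA : 1 < Fintype.card A)
    (hφ : ∀ x y : G → A, (∀ d ∈ D, x d = y d) → φ x = φ y)
    (ν : Measure (G → A)) [IsProbabilityMeasure ν] (hGibbs : IsGibbs φ D ν)
    {g : G} (hg : g ≠ 1) (s : Finset G)
    (hcond : ∀ h ∈ s, ∀ h' ∈ s, h * g ≠ h') :
    ν (⋂ h ∈ s, Efix g h) ≤ ENNReal.ofReal (cconst φ D) ^ s.card := by
  induction s using Finset.induction_on with
  | empty => simp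
  | @insert a s ha ih =>
    have hstep := step φ D hA hφ ν hGibbs hg a s ha
      (fun h hh => hcond h (Finset.mem_insert_of_mem hh) a (Finset.mem_insert_self _ _))
    have hih := ih (fun h hh h' hh' =>
      hcond h (Finset.mem_insert_of_mem hh) h' (Finset.mem_insert_of_mem hh'))
    calc ν (⋂ h ∈ (insert a s : Finset G), Efix g h)
        ≤ ENNReal.ofReal (cconst φ D) * ν (⋂ h ∈ s, Efix g h) := hstep
      _ ≤ ENNReal.ofReal (cconst φ D) * ENNReal.ofReal (cconst φ D) ^ s.card :=
          mul_le_mul_right hih _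
      _ = ENNReal.ofReal (cconst φ D) ^ (insert a s : Finset G).card := by
          rw [Finset.card_insert_of_notMem ha, pow_succ, mul_comm]

end Main

lemma exists_sites [Infinite G] (g : G) (hg : g ≠ 1) :
    ∀ n : ℕ, ∃ s : Finset G, s.card = n ∧ ∀ h ∈ s, ∀ h' ∈ s, h * g ≠ h'
  | 0 => ⟨∅, by simp⟩
  | n + 1 => by
    obtain ⟨s, hcard, hcond⟩ := exists_sites g hg n
    obtain ⟨h₀, hh₀⟩ := Infinite.exists_notMem_finset
      (s ∪ s.image (· * g) ∪ s.image (· * g⁻¹))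
    simp only [Finset.mem_union, Finset.mem_image, not_or, not_exists, not_and] at hh₀
    obtain ⟨⟨hh1, hh2⟩, hh3⟩ := hh₀
    refine ⟨insert h₀ s, ?_, ?_⟩
    · rw [Finset.card_insert_of_notMem hh1, hcard]
    · intro h hh h' hh'
      rcases Finset.mem_insert.1 hh with h1 | h1 <;>
        rcases Finset.mem_insert.1 hh' with h2 | h2
      · rw [h1, h2]
        exact fun hcon => hg (mul_eq_left.mp hcon)
      · rw [h1]
        intro hcon
        exact hh3 h' h2 (by rw [← hcon]; group)
      · rw [h2]
        intro hcon
        exact hh2 h h1 hcon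
      · exact hcond h h1 h' h2

/-- A shift-invariant Gibbs measure over a countably infinite group `G` (for a potential
`φ` depending on the coordinates in a finite window `D`, over an alphabet with at least two
letters) gives an essentially free shift action: for every `g ≠ e`, the set of fixed points
of `g` is `ν`-null. -/
theorem stmt18 [Countable G] [Infinite G] (hA : 1 < Fintype.card A)
    (φ : (G → A) → ℝ) (D : Finset G)
    (hφ : ∀ x y : G → A, (∀ d ∈ D, x d = y d) → φ x = φ y)
    (ν : Measure (G → A)) [IsProbabilityMeasure ν]
    (hGibbs : IsGibbs φ D ν) (hinv : ∀ g : G, ν.map (shift g) = ν) :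
    ∀ g : G, g ≠ 1 → ν {x : G → A | shift g x = x} = 0 := by
  intro g hg
  have hc1 : ENNReal.ofReal (cconst φ D) < 1 := ENNReal.ofReal_lt_one.2 (cconst_lt_one φ D)
  have hbound : ∀ n : ℕ, ν {x : G → A | shift g x = x} ≤ ENNReal.ofReal (cconst φ D) ^ n := by
    intro n
    obtain ⟨s, hcard, hcond⟩ := exists_sites g hg n
    have hsub : {x : G → A | shift g x = x} ⊆ ⋂ h ∈ s, Efix g h := by
      intro x hx
      simp only [Set.mem_iInter]
      intro h _
      exact congrFun hx h
    calc ν {x : G → A | shift g x = x} ≤ ν (⋂ h ∈ s, Efix g h) := measure_mono hsub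
      _ ≤ ENNReal.ofReal (cconst φ D) ^ s.card := bound φ D hA hφ ν hGibbs hg s hcond
      _ = ENNReal.ofReal (cconst φ D) ^ n := by rw [hcard]
  have h0 : Tendsto (fun n : ℕ => ENNReal.ofReal (cconst φ D) ^ n) atTop (nhds 0) :=
    ENNReal.tendsto_pow_atTop_nhds_zero_of_lt_one hc1
  exact le_antisymm (ge_of_tendsto' h0 hbound) zero_le'

end ShiftGibbs
end
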